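/- Let x, y ∈ ℂⁿ with x ≠ 0. Then there exists a symmetric matrix Δ ∈ ℂ^{n×n} (Δᵀ = Δ) with Δx = y, and the minimal spectral norm over all such symmetric Δ equals ‖y‖/‖x‖. -/

import Mathlib

open Matrix

set_option maxHeartbeats 1000000

/-- The spectral (operator 2-) norm of a complex matrix. -/
noncomputable def specNorm {n : ℕ} (A : Matrix (Fin n) (Fin n) ℂ) : ℝ :=
  ‖Matrix.toEuclideanCLM (𝕜 := ℂ) A‖

/-- The Euclidean norm of a complex vector. -/
noncomputable def evNorm {n : ℕ} (v : Fin n → ℂ) : ℝ :=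
  ‖(WithLp.equiv 2 (Fin n → ℂ)).symm v‖

namespace SymMap

variable {n : ℕ}

noncomputable abbrev e (v : Fin n → ℂ) : EuclideanSpace ℂ (Fin n) :=
  (WithLp.equiv 2 (Fin n → ℂ)).symm v

lemma vecMulVec_mulVec (a b v : Fin n → ℂ) :
    (Matrix.vecMulVec a b).mulVec v = (b ⬝ᵥ v) • a := by
  ext i
  simp only [Matrix.mulVec, dotProduct, Matrix.vecMulVec_apply, Pi.smul_apply,
    smul_eq_mul, Finset.mul_sum, mul_comm, mul_assoc, mul_left_comm]

lemma inner_e (u v : Fin n → ℂ) : (inner ℂ (e u) (e v) : ℂ) = star u ⬝ᵥ v := by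
  simp [PiLp.inner_apply, dotProduct, mul_comm]

lemma evNorm_star (v : Fin n → ℂ) : evNorm (star v) = evNorm v := by
  simp [evNorm, EuclideanSpace.norm_eq]

lemma evNorm_smul (c : ℂ) (v : Fin n → ℂ) : evNorm (c • v) = ‖c‖ * evNorm v := by
  simp [evNorm, WithLp.toLp_smul, norm_smul]

lemma star_dot_star (u v : Fin n → ℂ) : star u ⬝ᵥ star v = (starRingEnd ℂ) (u ⬝ᵥ v) := by
  simp [dotProduct, map_sum]

lemma e_eq_zero {v : Fin n → ℂ} (h : e v = 0) : v = 0 := by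
  have : v = 0 := by simpa [e] using congrArg (WithLp.equiv 2 (Fin n → ℂ)) h
  simpa using this

lemma dot_self (v : Fin n → ℂ) : star v ⬝ᵥ v = ((evNorm v : ℂ))^2 := by
  have h : (inner ℂ (e v) (e v) : ℂ) = ((‖e v‖ : ℂ))^2 := inner_self_eq_norm_sq_to_K (e v)
  rw [inner_e] at h
  exact h

lemma mul_conj_self (z : ℂ) : z * (starRingEnd ℂ) z = ((‖z‖^2 : ℝ) : ℂ) := by
  rw [Complex.mul_conj]
  norm_cast
  rw [Complex.normSq_eq_norm_sq]

lemma lower {Δ : Matrix (Fin n) (Fin n) ℂ} {x y : Fin n → ℂ} (h : Δ.mulVec x = y) :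
    evNorm y ≤ specNorm Δ * evNorm x := by
  have h2 := (Matrix.toEuclideanCLM (𝕜 := ℂ) Δ).le_opNorm (e x)
  have h3 : Matrix.toEuclideanCLM (𝕜 := ℂ) Δ (e x) = e (Matrix.toLin' Δ x) := rfl
  rw [h3] at h2
  simp only [Matrix.toLin'_apply] at h2
  rw [h] at h2
  exact h2

lemma upper {Δ : Matrix (Fin n) (Fin n) ℂ} {C : ℝ} (hC : 0 ≤ C)
    (h : ∀ z : Fin n → ℂ, evNorm (Δ.mulVec z) ≤ C * evNorm z) :
    specNorm Δ ≤ C := by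
  apply ContinuousLinearMap.opNorm_le_bound _ hC
  intro v
  have h2 := h (WithLp.equiv 2 (Fin n → ℂ) v)
  simp only [evNorm] at h2
  rw [← Matrix.toLin'_apply] at h2
  have h3 : (WithLp.equiv 2 (Fin n → ℂ)).symm ((Matrix.toLin' Δ) ((WithLp.equiv 2 (Fin n → ℂ)) v)) = Matrix.toEuclideanCLM (𝕜 := ℂ) Δ v := rfl
  rw [h3] at h2
  simpa using h2

lemma two_bessel (u v z : EuclideanSpace ℂ (Fin n))
    (hu : ‖u‖ = 1) (hv : ‖v‖ = 1) (huv : (inner ℂ u v : ℂ) = 0) :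
    ‖(inner ℂ u z : ℂ)‖ ^ 2 + ‖(inner ℂ v z : ℂ)‖ ^ 2 ≤ ‖z‖ ^ 2 := by
  have huv' : (inner ℂ v u : ℂ) = 0 := by
    rw [← inner_conj_symm, huv]; simp
  have horth : Orthonormal ℂ (![u, v]) := by
    rw [orthonormal_iff_ite]
    intro i j
    fin_cases i <;> fin_cases j <;>
      simp [inner_self_eq_norm_sq_to_K, hu, hv, huv, huv']
  have := horth.sum_inner_products_le (s := Finset.univ) z
  simpa [Fin.sum_univ_two] using this

end SymMap

open SymMap

open Matrix in
/-- Symmetric mapping theorem: for `x ≠ 0` there is always a complex symmetric `Δ` with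
`Δx = y`, and the minimal spectral norm over all such `Δ` is `‖y‖/‖x‖`. -/
theorem symmetric_mapping {n : ℕ} (x y : Fin n → ℂ) (hx : x ≠ 0) :
    IsLeast {r : ℝ | ∃ Δ : Matrix (Fin n) (Fin n) ℂ,
        Δᵀ = Δ ∧ Δ.mulVec x = y ∧ specNorm Δ = r}
      (evNorm y / evNorm x) := by
  have hN : 0 < evNorm x := by
    simp only [evNorm, norm_pos_iff]
    intro h
    exact hx (e_eq_zero h)
  set N : ℝ := evNorm x with hNdef
  set β : ℝ := evNorm y with hβdef
  constructor
  · -- membership: construct optimal Δ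
    by_cases hy : y = 0
    · refine ⟨0, by simp, by simp [hy], ?_⟩
      have h1 : specNorm (0 : Matrix (Fin n) (Fin n) ℂ) = 0 := by
        rw [specNorm, map_zero, norm_zero]
      have hβ0 : β = 0 := by
        rw [hβdef, hy]
        simp [evNorm]
      rw [h1, hβ0, zero_div]
    · have hβ : 0 < β := by
        simp only [hβdef, evNorm, norm_pos_iff]
        intro h; exact hy (e_eq_zero h)
      -- normalized vectors
      set x' : Fin n → ℂ := ((N : ℂ))⁻¹ • x with hx'def
      set y' : Fin n → ℂ := ((β : ℂ))⁻¹ • y with hy'def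
      have hxn : evNorm x' = 1 := by
        rw [hx'def, evNorm_smul]
        simp [abs_of_pos hN, ← hNdef]
        exact inv_mul_cancel₀ hN.ne'
      have hyn : evNorm y' = 1 := by
        rw [hy'def, evNorm_smul]
        simp [abs_of_pos hβ, ← hβdef]
        exact inv_mul_cancel₀ hβ.ne'
      set X : Fin n → ℂ := star x' with hXdef
      set c : ℂ := y' ⬝ᵥ x' with hcdef
      set γ : ℝ := ‖c‖ with hγdef
      have hγ1 : γ ≤ 1 := by
        have h1 : c = inner ℂ (e (star y')) (e x') := by
          rw [inner_e, star_star]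
        have h2 := norm_inner_le_norm (𝕜 := ℂ) (e (star y')) (e x')
        rw [← h1] at h2
        calc γ = ‖c‖ := hγdef
          _ ≤ ‖e (star y')‖ * ‖e x'‖ := h2
          _ = evNorm (star y') * evNorm x' := rfl
          _ = 1 := by rw [evNorm_star, hxn, hyn]; norm_num
      have hγ0 : 0 ≤ γ := norm_nonneg c
      set s : ℝ := Real.sqrt (1 - γ^2) with hsdef
      have hs0 : 0 ≤ s := Real.sqrt_nonneg _
      have hs2 : s^2 = 1 - γ^2 := Real.sq_sqrt (by nlinarith)
      set σ : ℂ := (s : ℂ) with hσdef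
      set w : Fin n → ℂ := y' - c • X with hwdef
      -- dot product facts
      have dXx : X ⬝ᵥ x' = 1 := by
        rw [hXdef, dot_self, hxn]; norm_num
      have dxX : x' ⬝ᵥ X = 1 := by rw [dotProduct_comm, dXx]
      have dwx : w ⬝ᵥ x' = 0 := by
        rw [hwdef, sub_dotProduct, ← hcdef, smul_dotProduct, dXx]
        simp
      have dxw : x' ⬝ᵥ w = 0 := by rw [dotProduct_comm, dwx]
      have hw2 : ‖e w‖^2 = 1 - γ^2 := by
        have hew : e w = e y' - c • e X := by
          rw [hwdef]; simp [e, WithLp.toLp_sub, WithLp.toLp_smul]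
        have hip : (inner ℂ (e y') (c • e X) : ℂ) = ((γ^2 : ℝ) : ℂ) := by
          rw [inner_smul_right, inner_e, hXdef, star_dot_star, ← hcdef, mul_conj_self, hγdef]
        rw [hew, @norm_sub_sq ℂ _ _ _ _ (e y') (c • e X), hip]
        have h1 : ‖e y'‖ = 1 := hyn
        have h2 : ‖c • e X‖ = γ := by
          rw [norm_smul]
          have : ‖e X‖ = 1 := by
            rw [hXdef]
            show evNorm (star x') = 1
            rw [evNorm_star, hxn]
          rw [this, hγdef, mul_one]
        rw [h1, h2]
        simp only [RCLike.re_eq_complex_re, Complex.ofReal_re, one_pow]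
        ring
      set u : Fin n → ℂ := σ⁻¹ • w with hudef
      have hsu : σ • u = w := by
        by_cases hs : s = 0
        · have hγ2 : 1 - γ^2 = 0 := by rw [← hs2, hs]; ring
          have : e w = 0 := by
            have : ‖e w‖^2 = 0 := by rw [hw2, hγ2]
            have : ‖e w‖ = 0 := by nlinarith [norm_nonneg (e w)]
            exact norm_eq_zero.mp this
          have hw0 : w = 0 := e_eq_zero this
          rw [hudef, hw0]
          simp
        · rw [hudef, smul_smul, mul_inv_cancel₀ (by simpa [hσdef] using hs), one_smul]
      have dux : u ⬝ᵥ x' = 0 := by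
        rw [hudef, smul_dotProduct, dwx]; simp
      have dxu : x' ⬝ᵥ u = 0 := by rw [dotProduct_comm, dux]
      -- norm of u
      have hu_cases : u = 0 ∨ ‖e u‖ = 1 := by
        by_cases hs : s = 0
        · left
          rw [hudef, hσdef, hs]
          simp
        · right
          have : ‖e u‖ = ‖(σ⁻¹ : ℂ)‖ * ‖e w‖ := by
            rw [hudef]
            show evNorm _ = _
            rw [evNorm_smul]; rfl
          rw [this, hσdef]
          have hwn : ‖e w‖ = s := by
            have : ‖e w‖^2 = s^2 := by rw [hw2, hs2]
            nlinarith [norm_nonneg (e w), hs0]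
          rw [hwn]
          simp [abs_of_nonneg hs0]
          exact inv_mul_cancel₀ hs
      have hu_le : ‖e u‖ ≤ 1 := by
        rcases hu_cases with h | h
        · rw [h]; simp [e]
        · rw [h]
      -- the matrix
      set κ : ℂ := ((β/N : ℝ) : ℂ) with hκdef
      set Q : Matrix (Fin n) (Fin n) ℂ :=
        c • vecMulVec X X + σ • (vecMulVec X u + vecMulVec u X)
          - (starRingEnd ℂ c) • vecMulVec u u with hQdef
      clear_value Q κ u w σ s γ c X y' x'
      have hQz : ∀ z : Fin n → ℂ, Q.mulVec z =
          (c * (X ⬝ᵥ z) + σ * (u ⬝ᵥ z)) • X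
            + (σ * (X ⬝ᵥ z) - starRingEnd ℂ c * (u ⬝ᵥ z)) • u := by
        intro z
        rw [hQdef]
        simp only [Matrix.sub_mulVec, Matrix.add_mulVec, Matrix.smul_mulVec,
          SymMap.vecMulVec_mulVec]
        ext i
        simp only [Pi.add_apply, Pi.sub_apply, Pi.smul_apply, smul_eq_mul]
        ring
      have hmul : (κ • Q).mulVec x = y := by
        have dXx2 : X ⬝ᵥ x = (N : ℂ) := by
          have hxx : x = (N : ℂ) • x' := by
            rw [hx'def, smul_smul, mul_inv_cancel₀ (by exact_mod_cast hN.ne'), one_smul]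
          rw [hxx, dotProduct_smul, dXx]
          simp
        have dux2 : u ⬝ᵥ x = 0 := by
          have hxx : x = (N : ℂ) • x' := by
            rw [hx'def, smul_smul, mul_inv_cancel₀ (by exact_mod_cast hN.ne'), one_smul]
          rw [hxx, dotProduct_smul, dux]
          simp
        rw [Matrix.smul_mulVec, hQz, dXx2, dux2]
        have key : (c * (N : ℂ) + σ * 0) • X + (σ * (N : ℂ) - starRingEnd ℂ c * 0) • u
            = (N : ℂ) • (c • X + σ • u) := by
          ext i
          simp only [Pi.add_apply, Pi.smul_apply, smul_eq_mul]
          ring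
        rw [key]
        have key2 : c • X + σ • u = y' := by
          rw [hsu, hwdef]
          ext i; simp
        rw [key2, hy'def, smul_smul, smul_smul]
        have : κ * (N : ℂ) * (β : ℂ)⁻¹ = 1 := by
          have hNc : ((N:ℝ):ℂ) ≠ 0 := by exact_mod_cast hN.ne'
          have hβc : ((β:ℝ):ℂ) ≠ 0 := by exact_mod_cast hβ.ne'
          rw [hκdef]
          push_cast
          field_simp
          try ring
        rw [this, one_smul]
      refine ⟨κ • Q, ?_, hmul, ?_⟩
      · -- symmetry
        rw [hQdef]
        have hT : ∀ a b : Fin n → ℂ, (vecMulVec a b)ᵀ = vecMulVec b a := by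
          intro a b; ext i j
          simp [vecMulVec_apply, transpose_apply, mul_comm]
        simp only [transpose_smul, transpose_sub, transpose_add, hT]
        congr 1
        congr 1
        congr 1
        congr 1
        exact add_comm _ _
      · -- norm
        have hXn : ‖e X‖ = 1 := by
          rw [hXdef]
          show evNorm (star x') = 1
          rw [evNorm_star, hxn]
        have hinner : (inner ℂ (e X) (e u) : ℂ) = 0 := by
          rw [inner_e, hXdef, star_star]
          exact dxu
        have hbound : ∀ z : Fin n → ℂ, evNorm ((κ • Q).mulVec z) ≤ (β/N) * evNorm z := by
          intro z
          rw [Matrix.smul_mulVec, hQz z, evNorm_smul]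
          have hκn : ‖κ‖ = β / N := by
            rw [hκdef, Complex.norm_real, Real.norm_eq_abs]
            exact abs_of_nonneg (div_nonneg hβ.le hN.le)
          rw [hκn]
          set a : ℂ := X ⬝ᵥ z with hadef
          set b : ℂ := u ⬝ᵥ z with hbdef
          set A : ℂ := c * a + σ * b with hAdef
          set B : ℂ := σ * a - starRingEnd ℂ c * b with hBdef
          clear_value A B a b
          have hsplit : e (A • X + B • u) = A • e X + B • e u := by
            simp [e, WithLp.toLp_add, WithLp.toLp_smul]
          have hnorm2 : ‖A • e X + B • e u‖^2 = ‖A‖^2 * ‖e X‖^2 + ‖B‖^2 * ‖e u‖^2 := by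
            rw [@norm_add_sq ℂ _ _ _ _ (A • e X) (B • e u), inner_smul_left,
              inner_smul_right, hinner]
            simp [norm_smul, mul_pow]
          have hcσ : c * starRingEnd ℂ c + σ * σ = 1 := by
            rw [mul_conj_self c, hσdef]
            norm_cast
            nlinarith [hs2]
          have hident : ‖A‖^2 + ‖B‖^2 = ‖a‖^2 + ‖b‖^2 := by
            have hconj : A * starRingEnd ℂ A + B * starRingEnd ℂ B
                = (c * starRingEnd ℂ c + σ * σ) * (a * starRingEnd ℂ a + b * starRingEnd ℂ b) := by
              rw [hAdef, hBdef, hσdef]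
              simp only [map_add, _root_.map_mul, map_sub, Complex.conj_ofReal, Complex.conj_conj]
              ring
            rw [hcσ, one_mul, mul_conj_self A, mul_conj_self B, mul_conj_self a,
              mul_conj_self b, ← Complex.ofReal_add, ← Complex.ofReal_add] at hconj
            exact_mod_cast hconj
          have habs : ‖a‖^2 + ‖b‖^2 ≤ ‖e z‖^2 := by
            have ha : a = inner ℂ (e x') (e z) := by
              rw [inner_e, ← hXdef]
              exact hadef
            rcases hu_cases with h0 | h1
            · have hb : b = 0 := by
                rw [hbdef, h0, zero_dotProduct]
              rw [hb]
              have hcs := norm_inner_le_norm (𝕜 := ℂ) (e x') (e z)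
              rw [← ha] at hcs
              have hx1 : ‖e x'‖ = 1 := hxn
              rw [hx1, one_mul] at hcs
              simp only [norm_zero]
              nlinarith [norm_nonneg a, norm_nonneg (e z)]
            · have hb : b = inner ℂ (e (star u)) (e z) := by
                rw [inner_e, star_star]
                exact hbdef
              have hsu1 : ‖e (star u)‖ = 1 := by
                show evNorm (star u) = 1
                rw [evNorm_star]
                exact h1
              have hinner2 : (inner ℂ (e x') (e (star u)) : ℂ) = 0 := by
                rw [inner_e, star_dot_star, dxu, map_zero]
              have := two_bessel (e x') (e (star u)) (e z) hxn hsu1 hinner2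
              rw [← ha, ← hb] at this
              exact this
          have hcore : evNorm (A • X + B • u) ≤ evNorm z := by
            show ‖e (A • X + B • u)‖ ≤ ‖e z‖
            have hsq : ‖e (A • X + B • u)‖^2 ≤ ‖e z‖^2 := by
              rw [hsplit, hnorm2, hXn]
              have h3 : ‖e u‖ ^ 2 ≤ 1 := by nlinarith [norm_nonneg (e u)]
              have h4 : ‖B‖ ^ 2 * ‖e u‖ ^ 2 ≤ ‖B‖ ^ 2 := by nlinarith [sq_nonneg ‖B‖]
              nlinarith [hident, habs]
            have hsqrt := Real.sqrt_le_sqrt hsq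
            rwa [Real.sqrt_sq (norm_nonneg _), Real.sqrt_sq (norm_nonneg _)] at hsqrt
          exact mul_le_mul_of_nonneg_left hcore (div_nonneg hβ.le hN.le)
        have hup : specNorm (κ • Q) ≤ β / N :=
          upper (div_nonneg hβ.le hN.le) hbound
        have hlow : β / N ≤ specNorm (κ • Q) := by
          rw [div_le_iff₀ hN]
          exact lower hmul
        linarith
  · -- lower bound
    rintro r ⟨Δ, -, hΔx, rfl⟩
    rw [div_le_iff₀ hN]
    exact lower hΔx
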